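/- Let A be a real symmetric positive definite n×n matrix and B a real symmetric n×n matrix, and assume the residual propagation matrix S := I − A·B is symmetric with eigenvalues λ₁ ≥ λ₂ ≥ ⋯ ≥ λ_N (counted with multiplicity) satisfying 1 > λ₁ =: ρ_err and λ_N > 0. Let u ∈ ℝⁿ solve A·u = f, define the iteration u^{(k+1)} = u^{(k)} + B·(f − A·u^{(k)}), set r_k := f − A·u^{(k)}, and assume the orthogonal projection of r₀ onto the eigenspace of S for λ₁ is nonzero. Define ρ_err^{(k)} := ‖r_k‖₂/‖r_{k−1}‖₂ and the algebraic error estimator η_a^{(k+1)} := e^{1/k} · (ρ_err^{(k)}/(1 − ρ_err^{(k)})) · ‖u^{(k+1)} − u^{(k)}‖_A for k ≥ 1. Then there exists N ∈ ℕ such that for all k ≥ N, ‖u − u^{(k+1)}‖_A ≤ η_a^{(k+1)}. -/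

import Mathlib

open Matrix

/-- The `A`-norm of a vector `v`: `‖v‖_A = √(A·v ⋅ v)`. -/
noncomputable def ANorm {n : ℕ} (A : Matrix (Fin n) (Fin n) ℝ) (v : Fin n → ℝ) : ℝ :=
  Real.sqrt (A.mulVec v ⬝ᵥ v)

/-- The Euclidean norm of a vector `v`: `‖v‖₂ = √(v ⋅ v)`. -/
noncomputable def euclNorm {n : ℕ} (v : Fin n → ℝ) : ℝ :=
  Real.sqrt (v ⬝ᵥ v)

private lemma transpose_eq_of_herm {n : ℕ} {M : Matrix (Fin n) (Fin n) ℝ} (h : M.IsHermitian) :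
    Mᵀ = M := by
  have := h.eq
  rw [Matrix.conjTranspose] at this
  exact (Matrix.conjTranspose_eq_transpose_of_trivial M).symm.trans h.eq

private lemma dot_mulVec_symm {n : ℕ} {M : Matrix (Fin n) (Fin n) ℝ} (hM : Mᵀ = M)
    (v x : Fin n → ℝ) : v ⬝ᵥ (M *ᵥ x) = (M *ᵥ v) ⬝ᵥ x := by
  rw [dotProduct_mulVec]
  congr 1
  conv_lhs => rw [← hM]
  simp [vecMul_transpose]

private lemma inner_eq_dot {n : ℕ} (x y : EuclideanSpace ℝ (Fin n)) :
    (inner ℝ x y : ℝ) = ⇑x ⬝ᵥ ⇑y := by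
  simp [PiLp.inner_apply, dotProduct, mul_comm]

private lemma dot_eq_sum {n : ℕ} (b : OrthonormalBasis (Fin n) ℝ (EuclideanSpace ℝ (Fin n)))
    (x y : Fin n → ℝ) :
    x ⬝ᵥ y = ∑ i, (⇑(b i) ⬝ᵥ x) * (⇑(b i) ⬝ᵥ y) := by
  set ex := (WithLp.equiv 2 (Fin n → ℝ)).symm x with hex
  set ey := (WithLp.equiv 2 (Fin n → ℝ)).symm y with hey
  calc x ⬝ᵥ y = (inner ℝ ex ey : ℝ) := (inner_eq_dot ex ey).symm
    _ = ∑ i, (inner ℝ ex (b i) : ℝ) * inner ℝ (b i) ey := (b.sum_inner_mul_inner ex ey).symm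
    _ = ∑ i, (⇑(b i) ⬝ᵥ x) * (⇑(b i) ⬝ᵥ y) := by
        refine Finset.sum_congr rfl fun i _ => ?_
        rw [inner_eq_dot ex (b i), inner_eq_dot (b i) ey, dotProduct_comm (⇑ex)]
        rfl

private lemma dot_mulVec_eig {n : ℕ} {M : Matrix (Fin n) (Fin n) ℝ} (hM : M.IsHermitian)
    (i : Fin n) (x : Fin n → ℝ) :
    ⇑(hM.eigenvectorBasis i) ⬝ᵥ (M *ᵥ x)
      = hM.eigenvalues i * (⇑(hM.eigenvectorBasis i) ⬝ᵥ x) := by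
  rw [dot_mulVec_symm (transpose_eq_of_herm hM), hM.mulVec_eigenvectorBasis, smul_dotProduct]
  rfl

private lemma aux_contract {n : ℕ} {M : Matrix (Fin n) (Fin n) ℝ} (hM : M.IsHermitian) {ρ : ℝ}
    (hρ0 : 0 < ρ) (hρ1 : ρ < 1)
    (hev : ∀ μ : ℝ, μ ∈ spectrum ℝ M → 0 < μ ∧ μ ≤ ρ) (x : Fin n → ℝ) :
    Real.sqrt ((M *ᵥ x) ⬝ᵥ (M *ᵥ x)) ≤
      ρ / (1 - ρ) * Real.sqrt (((1 - M) *ᵥ x) ⬝ᵥ ((1 - M) *ᵥ x)) := by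
  set b := hM.eigenvectorBasis with hb
  set ε := hM.eigenvalues with hε
  have hεb : ∀ i, 0 < ε i ∧ ε i ≤ ρ := fun i => hev _ (hM.eigenvalues_mem_spectrum_real i)
  set c := ρ / (1 - ρ) with hc
  have hc0 : 0 ≤ c := div_nonneg hρ0.le (by linarith)
  have h1 : (M *ᵥ x) ⬝ᵥ (M *ᵥ x) = ∑ i, (ε i * (⇑(b i) ⬝ᵥ x)) ^ 2 := by
    rw [dot_eq_sum b]
    refine Finset.sum_congr rfl fun i _ => ?_
    rw [dot_mulVec_eig hM, sq]
  have h2 : ((1 - M) *ᵥ x) ⬝ᵥ ((1 - M) *ᵥ x) = ∑ i, ((1 - ε i) * (⇑(b i) ⬝ᵥ x)) ^ 2 := by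
    rw [dot_eq_sum b]
    refine Finset.sum_congr rfl fun i _ => ?_
    rw [Matrix.sub_mulVec, Matrix.one_mulVec, dotProduct_sub, dot_mulVec_eig hM]
    ring
  rw [h1, h2]
  have hsum : ∑ i, (ε i * (⇑(b i) ⬝ᵥ x)) ^ 2 ≤ c ^ 2 * ∑ i, ((1 - ε i) * (⇑(b i) ⬝ᵥ x)) ^ 2 := by
    rw [Finset.mul_sum]
    refine Finset.sum_le_sum fun i _ => ?_
    obtain ⟨he0, heρ⟩ := hεb i
    have h3 : ε i ≤ c * (1 - ε i) := by
      rw [hc, div_mul_eq_mul_div, le_div_iff₀ (by linarith)]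
      nlinarith
    nlinarith [mul_self_le_mul_self he0.le h3, sq_nonneg (⇑(b i) ⬝ᵥ x)]
  calc Real.sqrt (∑ i, (ε i * (⇑(b i) ⬝ᵥ x)) ^ 2)
      ≤ Real.sqrt (c ^ 2 * ∑ i, ((1 - ε i) * (⇑(b i) ⬝ᵥ x)) ^ 2) := Real.sqrt_le_sqrt hsum
    _ = c * Real.sqrt (∑ i, ((1 - ε i) * (⇑(b i) ⬝ᵥ x)) ^ 2) := by
        rw [Real.sqrt_mul (sq_nonneg c), Real.sqrt_sq hc0]
private lemma aux_scalar {ρ rk t κ E : ℝ} (hρ0 : 0 < ρ) (hρ1 : ρ < 1) (hrk0 : 0 ≤ rk)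
    (hrkρ : rk ≤ ρ) (ht0 : 0 ≤ t) (hlow : ρ ^ 2 * (1 - t) ≤ rk ^ 2)
    (hκ0 : 0 < κ) (hκ1 : κ ≤ 1) (ht : t ≤ (1 - ρ) * κ / 2) (hE : 1 + κ ≤ E) :
    ρ / (1 - ρ) ≤ E * (rk / (1 - rk)) := by
  have ht1 : t ≤ 1 := by nlinarith
  have h1 : ρ * (1 - t) ≤ rk := by nlinarith [sq_nonneg (rk - ρ * (1 - t)), sq_nonneg rk]
  have hrk1 : rk < 1 := lt_of_le_of_lt hrkρ hρ1
  rw [mul_div_assoc', div_le_div_iff₀ (by linarith) (by linarith)]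
  have hδ : ρ - rk ≤ ρ * (1 - ρ) * κ / 2 := by nlinarith
  have hcoef : ρ + (1 + κ) * (1 - ρ) ≤ 2 := by nlinarith
  have hmain : (ρ - rk) * (ρ + (1 + κ) * (1 - ρ)) ≤ ρ * (1 - ρ) * κ / 2 * 2 := by
    apply mul_le_mul hδ hcoef (by nlinarith) (by nlinarith)
  have key : ρ * (1 - rk) ≤ (1 + κ) * rk * (1 - ρ) := by nlinarith [hmain]
  nlinarith [mul_nonneg (mul_nonneg hrk0 (by linarith : (0:ℝ) ≤ 1 - ρ))
    (by linarith : (0:ℝ) ≤ E - (1 + κ))]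
private lemma spectrum_transpose' {n : ℕ} (M : Matrix (Fin n) (Fin n) ℝ) :
    spectrum ℝ Mᵀ = spectrum ℝ M := by
  ext μ
  simp only [spectrum.mem_iff, not_iff_not]
  have key : algebraMap ℝ (Matrix (Fin n) (Fin n) ℝ) μ - Mᵀ
      = (algebraMap ℝ (Matrix (Fin n) (Fin n) ℝ) μ - M)ᵀ := by
    rw [Matrix.transpose_sub]
    congr 1
    rw [Algebra.algebraMap_eq_smul_one]
    simp
  rw [key, Matrix.isUnit_iff_isUnit_det, Matrix.det_transpose, ← Matrix.isUnit_iff_isUnit_det]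

private lemma hasEigen_of_mem_spectrum {n : ℕ} {M : Matrix (Fin n) (Fin n) ℝ} {μ : ℝ}
    (h : μ ∈ spectrum ℝ M) : Module.End.HasEigenvalue (Matrix.toLin' M) μ := by
  rw [Module.End.hasEigenvalue_iff_mem_spectrum]
  rwa [show Matrix.toLin' M = Matrix.toLinAlgEquiv' M from rfl, AlgEquiv.spectrum_eq]

set_option maxHeartbeats 3000000 in
/-- Reliability of the algebraic error estimator: with `A` symmetric positive definite,
`B` symmetric, residual propagation matrix `S = I - A·B` symmetric with eigenvalues in
`(0,1)` and largest eigenvalue `ρ_err`, iteration `u^{(k+1)} = u^{(k)} + B(f - A u^{(k)})`,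
residuals `r_k = f - A u^{(k)}` with the projection of `r₀` onto the `ρ_err`-eigenspace
nonzero, and `ρ_err^{(k)} = ‖r_k‖₂/‖r_{k-1}‖₂`, there exists `N` such that for all
`k ≥ N`, `‖u - u^{(k+1)}‖_A ≤ e^{1/k}·(ρ_err^{(k)}/(1-ρ_err^{(k)}))·‖u^{(k+1)}-u^{(k)}‖_A`. -/
theorem algebraic_estimator_reliability {n : ℕ}
    (A B : Matrix (Fin n) (Fin n) ℝ)
    (hA : A.PosDef) (hB : B.IsSymm) (hS : (1 - A * B).IsSymm)
    (rho_err : ℝ)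
    (hlam1 : Module.End.HasEigenvalue (Matrix.toLin' (1 - A * B)) rho_err)
    (hmax : ∀ μ : ℝ, Module.End.HasEigenvalue (Matrix.toLin' (1 - A * B)) μ → μ ≤ rho_err)
    (heig : ∀ μ : ℝ, Module.End.HasEigenvalue (Matrix.toLin' (1 - A * B)) μ → 0 < μ ∧ μ < 1)
    (hρ : rho_err < 1)
    (f u : Fin n → ℝ) (hu : A.mulVec u = f)
    (uk : ℕ → Fin n → ℝ)
    (hiter : ∀ k : ℕ, uk (k + 1) = uk k + B.mulVec (f - A.mulVec (uk k)))
    (hproj : ∃ v : Fin n → ℝ,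
      v ∈ Module.End.eigenspace (Matrix.toLin' (1 - A * B)) rho_err ∧
        v ⬝ᵥ (f - A.mulVec (uk 0)) ≠ 0) :
    ∃ N : ℕ, 1 ≤ N ∧ ∀ k : ℕ, N ≤ k →
      ANorm A (u - uk (k + 1)) ≤
        Real.exp (1 / (k : ℝ)) *
          ((euclNorm (f - A.mulVec (uk k)) / euclNorm (f - A.mulVec (uk (k - 1)))) /
            (1 - euclNorm (f - A.mulVec (uk k)) / euclNorm (f - A.mulVec (uk (k - 1))))) *
          ANorm A (uk (k + 1) - uk k) := by
  classical
  have hρ0 : 0 < rho_err := (heig _ hlam1).1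
  set S : Matrix (Fin n) (Fin n) ℝ := 1 - A * B with hSdef
  have hAt : Aᵀ = A := transpose_eq_of_herm hA.isHermitian
  have hBt : Bᵀ = B := hB
  have hSherm : S.IsHermitian := by
    rw [Matrix.IsHermitian, Matrix.conjTranspose]
    exact (Matrix.conjTranspose_eq_transpose_of_trivial S).trans hS
  have hspecS : ∀ μ : ℝ, μ ∈ spectrum ℝ S → 0 < μ ∧ μ ≤ rho_err := fun μ h =>
    ⟨(heig μ (hasEigen_of_mem_spectrum h)).1, hmax μ (hasEigen_of_mem_spectrum h)⟩
  have hST : Sᵀ = 1 - B * A := by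
    rw [hSdef, Matrix.transpose_sub, Matrix.transpose_one, Matrix.transpose_mul, hAt, hBt]
  -- the square root of A
  have hBherm : B.IsHermitian := by
    rw [Matrix.IsHermitian, Matrix.conjTranspose]
    exact (Matrix.conjTranspose_eq_transpose_of_trivial B).trans hB
  obtain ⟨Q, hQ2, hQherm, hQunit⟩ :
      ∃ Q : Matrix (Fin n) (Fin n) ℝ, Q * Q = A ∧ Q.IsHermitian ∧ IsUnit Q := by
    open scoped MatrixOrder in
    · refine ⟨CFC.sqrt A, CFC.sqrt_mul_sqrt_self A hA.posSemidef.nonneg,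
        (CFC.sqrt_nonneg A).posSemidef.1, ?_⟩
      rw [Matrix.isUnit_iff_isUnit_det]
      have hdet : (CFC.sqrt A).det * (CFC.sqrt A).det = A.det := by
        rw [← Matrix.det_mul, CFC.sqrt_mul_sqrt_self A hA.posSemidef.nonneg]
      have hne : (CFC.sqrt A).det ≠ 0 := by
        intro h0
        rw [h0, mul_zero] at hdet
        exact absurd hdet.symm (ne_of_gt hA.det_pos)
      exact isUnit_iff_ne_zero.mpr hne
  have hQt : Qᵀ = Q := transpose_eq_of_herm hQherm
  set St : Matrix (Fin n) (Fin n) ℝ := 1 - Q * B * Q with hStdef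
  have hStherm : St.IsHermitian := by
    rw [Matrix.IsHermitian, hStdef]
    rw [Matrix.conjTranspose_sub, Matrix.conjTranspose_one, Matrix.conjTranspose_mul,
      Matrix.conjTranspose_mul, hQherm.eq, hBherm.eq]
    noncomm_ring
  have hconj : St * Q = Q * Sᵀ := by
    have h1 : St * Q = Q - Q * B * (Q * Q) := by rw [hStdef]; noncomm_ring
    rw [h1, hQ2, hST]
    noncomm_ring
  have hspecSt : ∀ μ : ℝ, μ ∈ spectrum ℝ St → 0 < μ ∧ μ ≤ rho_err := by
    intro μ hμ
    apply hspecS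
    have hu1 : (hQunit.unit : Matrix (Fin n) (Fin n) ℝ) = Q := hQunit.unit_spec
    have hSt_eq : St = (hQunit.unit : Matrix (Fin n) (Fin n) ℝ) * Sᵀ *
        ((hQunit.unit⁻¹ : (Matrix (Fin n) (Fin n) ℝ)ˣ) : Matrix (Fin n) (Fin n) ℝ) := by
      have h2 : St * (hQunit.unit : Matrix (Fin n) (Fin n) ℝ) *
          ((hQunit.unit⁻¹ : (Matrix (Fin n) (Fin n) ℝ)ˣ) : Matrix (Fin n) (Fin n) ℝ) =
          (hQunit.unit : Matrix (Fin n) (Fin n) ℝ) * Sᵀ *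
          ((hQunit.unit⁻¹ : (Matrix (Fin n) (Fin n) ℝ)ˣ) : Matrix (Fin n) (Fin n) ℝ) := by
        rw [hu1, hconj]
      rwa [Units.mul_inv_cancel_right] at h2
    rw [hSt_eq, spectrum.units_conjugate, spectrum_transpose'] at hμ
    exact hμ
  -- residual recursion
  have hres : ∀ k, f - A *ᵥ uk (k + 1) = S *ᵥ (f - A *ᵥ uk k) := by
    intro k
    rw [hiter k, Matrix.mulVec_add, Matrix.mulVec_mulVec, hSdef, Matrix.sub_mulVec,
      Matrix.one_mulVec]
    abel
  -- error recursion
  have herr : ∀ k, u - uk (k + 1) = (1 - B * A) *ᵥ (u - uk k) := by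
    intro k
    rw [hiter k, show f - A *ᵥ uk k = A *ᵥ (u - uk k) by rw [Matrix.mulVec_sub, hu],
      Matrix.mulVec_mulVec, Matrix.sub_mulVec, Matrix.one_mulVec]
    abel
  have hdiff : ∀ k, uk (k + 1) - uk k = (B * A) *ᵥ (u - uk k) := by
    intro k
    rw [hiter k, show f - A *ᵥ uk k = A *ᵥ (u - uk k) by rw [Matrix.mulVec_sub, hu],
      Matrix.mulVec_mulVec]
    abel
  have hAnorm : ∀ v : Fin n → ℝ, ANorm A v = Real.sqrt ((Q *ᵥ v) ⬝ᵥ (Q *ᵥ v)) := by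
    intro v
    rw [ANorm]
    congr 1
    rw [show A.mulVec v = Q *ᵥ (Q *ᵥ v) by rw [Matrix.mulVec_mulVec, hQ2],
      dotProduct_comm, dot_mulVec_symm hQt]
  -- the main error bound
  have hbound : ∀ k, ANorm A (u - uk (k + 1)) ≤
      rho_err / (1 - rho_err) * ANorm A (uk (k + 1) - uk k) := by
    intro k
    rw [hAnorm, hAnorm]
    have h1 : Q *ᵥ (u - uk (k + 1)) = St *ᵥ (Q *ᵥ (u - uk k)) := by
      rw [herr k, Matrix.mulVec_mulVec, Matrix.mulVec_mulVec]
      rw [show Q * (1 - B * A) = St * Q by rw [hconj, hST]]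
    have h2 : Q *ᵥ (uk (k + 1) - uk k) = (1 - St) *ᵥ (Q *ᵥ (u - uk k)) := by
      rw [hdiff k, Matrix.mulVec_mulVec, Matrix.mulVec_mulVec]
      rw [show Q * (B * A) = (1 - St) * Q by
        rw [hStdef, show ((1 : Matrix (Fin n) (Fin n) ℝ) - (1 - Q * B * Q)) * Q
            = Q * B * (Q * Q) by noncomm_ring, hQ2]
        noncomm_ring]
    rw [h1, h2]
    exact aux_contract hStherm hρ0 hρ hspecSt _
  -- eigen decomposition of S
  set b := hSherm.eigenvectorBasis with hbdef
  set ε := hSherm.eigenvalues with hεdef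
  have hεspec : ∀ i, 0 < ε i ∧ ε i ≤ rho_err := fun i =>
    hspecS _ (hSherm.eigenvalues_mem_spectrum_real i)
  set r : ℕ → Fin n → ℝ := fun k => f - A *ᵥ uk k with hrdef
  have hr0 : ∀ k, f - A *ᵥ uk k = r k := fun _ => rfl
  have hrrec : ∀ k, r (k + 1) = S *ᵥ r k := fun k => hres k
  set c : Fin n → ℝ := fun i => ⇑(b i) ⬝ᵥ r 0 with hcdef
  have hcoefk : ∀ k i, ⇑(b i) ⬝ᵥ r k = ε i ^ k * c i := by
    intro k
    induction k with
    | zero => intro i; simp [hcdef]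
    | succ k ih =>
      intro i
      rw [hrrec k, dot_mulVec_eig hSherm, ih i]
      ring
  have hdot : ∀ k, r k ⬝ᵥ r k = ∑ i, (ε i ^ k * c i) ^ 2 := by
    intro k
    rw [dot_eq_sum b]
    exact Finset.sum_congr rfl fun i _ => by rw [hcoefk k i, sq]
  set sF : Finset (Fin n) := Finset.univ.filter (fun i => ε i = rho_err) with hsFdef
  set P := ∑ i ∈ sF, (c i) ^ 2 with hPdef
  set W := ∑ i ∈ sFᶜ, (c i) ^ 2 with hWdef
  have hW0 : 0 ≤ W := Finset.sum_nonneg fun i _ => sq_nonneg _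
  have hsplit : ∀ k, r k ⬝ᵥ r k
      = rho_err ^ (2 * k) * P + ∑ i ∈ sFᶜ, (ε i ^ k * c i) ^ 2 := by
    intro k
    rw [hdot k, ← Finset.sum_add_sum_compl sF]
    congr 1
    rw [hPdef, Finset.mul_sum]
    refine Finset.sum_congr rfl fun i hi => ?_
    have hεi : ε i = rho_err := (Finset.mem_filter.mp hi).2
    rw [hεi]; ring
  have hlowP : ∀ k, rho_err ^ (2 * k) * P ≤ r k ⬝ᵥ r k := by
    intro k
    rw [hsplit k]
    exact le_add_of_nonneg_right (Finset.sum_nonneg fun i _ => sq_nonneg _)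
  have hP : 0 < P := by
    obtain ⟨v, hv1, hv2⟩ := hproj
    have hv : S *ᵥ v = rho_err • v := by
      have h := Module.End.mem_eigenspace_iff.mp hv1
      rwa [Matrix.toLin'_apply] at h
    have horth : ∀ i ∈ sFᶜ, ⇑(b i) ⬝ᵥ v = 0 := by
      intro i hi
      have hne : ε i ≠ rho_err := by
        have := Finset.mem_compl.mp hi
        simpa [hsFdef] using this
      have h1 : ⇑(b i) ⬝ᵥ (S *ᵥ v) = ε i * (⇑(b i) ⬝ᵥ v) := dot_mulVec_eig hSherm i v
      rw [hv, dotProduct_smul, smul_eq_mul] at h1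
      have h2 : (rho_err - ε i) * (⇑(b i) ⬝ᵥ v) = 0 := by rw [sub_mul]; linarith
      rcases mul_eq_zero.mp h2 with h | h
      · exact absurd (by linarith) hne
      · exact h
    have hsum : v ⬝ᵥ r 0 = ∑ i ∈ sF, (⇑(b i) ⬝ᵥ v) * c i := by
      rw [dot_eq_sum b v (r 0), ← Finset.sum_add_sum_compl sF]
      have hz : ∑ i ∈ sFᶜ, (⇑(b i) ⬝ᵥ v) * (⇑(b i) ⬝ᵥ r 0) = 0 :=
        Finset.sum_eq_zero fun i hi => by rw [horth i hi, zero_mul]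
      rw [hz, add_zero]
    have hv2' : v ⬝ᵥ r 0 ≠ 0 := hv2
    rw [hsum] at hv2'
    obtain ⟨i, hi, hne⟩ := Finset.exists_ne_zero_of_sum_ne_zero hv2'
    have hci : c i ≠ 0 := fun h0 => hne (by rw [h0, mul_zero])
    have hle : (c i) ^ 2 ≤ P := Finset.single_le_sum (fun j _ => sq_nonneg (c j)) hi
    have : 0 < (c i) ^ 2 := pow_pos (abs_pos.mpr hci) 2 |>.trans_le (le_of_eq (by rw [sq_abs]))
    linarith
  have hapos : ∀ k, 0 < r k ⬝ᵥ r k := fun k =>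
    lt_of_lt_of_le (mul_pos (pow_pos hρ0 _) hP) (hlowP k)
  -- second eigenvalue bound
  set μ₂ : ℝ := if h : sFᶜ.Nonempty then sFᶜ.sup' h ε else rho_err / 2 with hμdef
  have hμlt : μ₂ < rho_err := by
    rw [hμdef]; split_ifs with h
    · rw [Finset.sup'_lt_iff]
      intro i hi
      have hne : ε i ≠ rho_err := by simpa [hsFdef] using Finset.mem_compl.mp hi
      exact lt_of_le_of_ne (hεspec i).2 hne
    · linarith
  have hμ0 : 0 ≤ μ₂ := by
    rw [hμdef]; split_ifs with h
    · obtain ⟨i, hi⟩ := h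
      exact le_trans (hεspec i).1.le (Finset.le_sup' ε hi)
    · linarith
  have hμbd : ∀ i ∈ sFᶜ, ε i ≤ μ₂ := by
    intro i hi
    rw [hμdef, dif_pos ⟨i, hi⟩]
    exact Finset.le_sup' ε hi
  have hupper : ∀ j, r (j + 1) ⬝ᵥ r (j + 1) ≤ rho_err ^ 2 * (r j ⬝ᵥ r j) := by
    intro j
    rw [hdot, hdot, Finset.mul_sum]
    refine Finset.sum_le_sum fun i _ => ?_
    have h1 := (hεspec i).1
    have h2 := (hεspec i).2
    have he : (ε i ^ (j + 1) * c i) ^ 2 = ε i ^ 2 * (ε i ^ j * c i) ^ 2 := by ring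
    rw [he]
    have h3 : ε i ^ 2 ≤ rho_err ^ 2 := pow_le_pow_left₀ h1.le h2 2
    nlinarith [sq_nonneg (ε i ^ j * c i)]
  have hlow2 : ∀ j, rho_err ^ 2 * (r j ⬝ᵥ r j) - rho_err ^ 2 * (μ₂ ^ (2 * j) * W)
      ≤ r (j + 1) ⬝ᵥ r (j + 1) := by
    intro j
    rw [hsplit j, hsplit (j + 1)]
    have hB1 : ∑ i ∈ sFᶜ, (ε i ^ j * c i) ^ 2 ≤ μ₂ ^ (2 * j) * W := by
      rw [hWdef, Finset.mul_sum]
      refine Finset.sum_le_sum fun i hi => ?_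
      have h1 := (hεspec i).1
      have h3 : ε i ^ j ≤ μ₂ ^ j := pow_le_pow_left₀ h1.le (hμbd i hi) j
      have h4 : (ε i ^ j) ^ 2 ≤ (μ₂ ^ j) ^ 2 := pow_le_pow_left₀ (pow_nonneg h1.le j) h3 2
      have he1 : (ε i ^ j * c i) ^ 2 = (ε i ^ j) ^ 2 * (c i) ^ 2 := by ring
      have he2 : μ₂ ^ (2 * j) * c i ^ 2 = (μ₂ ^ j) ^ 2 * (c i) ^ 2 := by ring
      rw [he1, he2]
      nlinarith [sq_nonneg (c i)]
    have hsum0 : 0 ≤ ∑ i ∈ sFᶜ, (ε i ^ (j + 1) * c i) ^ 2 :=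
      Finset.sum_nonneg fun i _ => sq_nonneg _
    have hpow : rho_err ^ (2 * (j + 1)) * P = rho_err ^ 2 * (rho_err ^ (2 * j) * P) := by ring
    nlinarith [mul_le_mul_of_nonneg_left hB1 (sq_nonneg rho_err)]
  set qq : ℝ := μ₂ ^ 2 / rho_err ^ 2 with hqdef
  set C : ℝ := W / P with hCdef
  have hq0 : 0 ≤ qq := div_nonneg (sq_nonneg _) (sq_nonneg _)
  have hq1 : qq < 1 := by
    rw [hqdef, div_lt_one (pow_pos hρ0 2)]
    nlinarith
  have hC0 : 0 ≤ C := div_nonneg hW0 hP.le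
  have hμW : ∀ j, μ₂ ^ (2 * j) * W ≤ qq ^ j * C * (r j ⬝ᵥ r j) := by
    intro j
    have hρj : rho_err ^ (2 * j) ≠ 0 := (pow_pos hρ0 _).ne'
    have hPne : P ≠ 0 := hP.ne'
    have hqj : qq ^ j = μ₂ ^ (2 * j) / rho_err ^ (2 * j) := by
      rw [hqdef, div_pow, ← pow_mul, ← pow_mul]
    calc μ₂ ^ (2 * j) * W = qq ^ j * C * (rho_err ^ (2 * j) * P) := by
          rw [hqj, hCdef]; field_simp
      _ ≤ qq ^ j * C * (r j ⬝ᵥ r j) :=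
          mul_le_mul_of_nonneg_left (hlowP j) (mul_nonneg (pow_nonneg hq0 j) hC0)
  have glow : ∀ j, rho_err ^ 2 * (1 - C * qq ^ j) * (r j ⬝ᵥ r j) ≤ r (j + 1) ⬝ᵥ r (j + 1) := by
    intro j
    nlinarith [mul_le_mul_of_nonneg_left (hμW j) (sq_nonneg rho_err), hlow2 j]
  -- choose N via the limit k * q^k → 0
  have h1t : Filter.Tendsto (fun j : ℕ => (j : ℝ) * qq ^ j) Filter.atTop (nhds 0) :=
    tendsto_self_mul_const_pow_of_lt_one hq0 hq1
  have h2t : Filter.Tendsto (fun j : ℕ => qq ^ j) Filter.atTop (nhds 0) :=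
    tendsto_pow_atTop_nhds_zero_of_lt_one hq0 hq1
  have h3t : Filter.Tendsto (fun j : ℕ => 2 * C * ((j : ℝ) * qq ^ j + qq ^ j))
      Filter.atTop (nhds 0) := by
    have := (h1t.add h2t).const_mul (2 * C)
    simpa using this
  have h4t : ∀ᶠ (j : ℕ) in Filter.atTop, 2 * C * ((j : ℝ) * qq ^ j + qq ^ j) < 1 - rho_err :=
    h3t.eventually_lt_const (by linarith)
  obtain ⟨N₀, hN₀⟩ := Filter.eventually_atTop.mp h4t
  refine ⟨N₀ + 1, Nat.succ_le_succ (Nat.zero_le _), ?_⟩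
  intro k hk
  obtain ⟨j, rfl⟩ : ∃ j, k = j + 1 := ⟨k - 1, (Nat.succ_pred_eq_of_pos (by omega)).symm⟩
  have hjN : N₀ ≤ j := by omega
  simp only [Nat.add_sub_cancel]
  rw [hr0 (j + 1), hr0 j]
  set rk : ℝ := euclNorm (r (j + 1)) / euclNorm (r j) with hrkdef
  have haj := hapos j
  have haj1 := hapos (j + 1)
  have hsqj : (euclNorm (r j)) ^ 2 = r j ⬝ᵥ r j := Real.sq_sqrt haj.le
  have hsqj1 : (euclNorm (r (j + 1))) ^ 2 = r (j + 1) ⬝ᵥ r (j + 1) := Real.sq_sqrt haj1.le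
  have hepos : 0 < euclNorm (r j) := Real.sqrt_pos.mpr haj
  have hrk0 : 0 ≤ rk := div_nonneg (Real.sqrt_nonneg _) (Real.sqrt_nonneg _)
  have hrkρ : rk ≤ rho_err := by
    rw [hrkdef, div_le_iff₀ hepos]
    have he : rho_err * Real.sqrt (r j ⬝ᵥ r j) = Real.sqrt (rho_err ^ 2 * (r j ⬝ᵥ r j)) := by
      rw [Real.sqrt_mul (sq_nonneg _), Real.sqrt_sq hρ0.le]
    calc euclNorm (r (j + 1)) = Real.sqrt (r (j + 1) ⬝ᵥ r (j + 1)) := rfl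
      _ ≤ Real.sqrt (rho_err ^ 2 * (r j ⬝ᵥ r j)) := Real.sqrt_le_sqrt (hupper j)
      _ = rho_err * euclNorm (r j) := by rw [← he]; rfl
  have hlowrk : rho_err ^ 2 * (1 - C * qq ^ j) ≤ rk ^ 2 := by
    have hrk2 : rk ^ 2 = (r (j + 1) ⬝ᵥ r (j + 1)) / (r j ⬝ᵥ r j) := by
      rw [hrkdef, div_pow, hsqj, hsqj1]
    rw [hrk2, le_div_iff₀ haj]
    exact glow j
  set κ : ℝ := 1 / ((j : ℝ) + 1) with hκdef
  have hjpos : (0 : ℝ) < (j : ℝ) + 1 := by positivity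
  have hκ0 : 0 < κ := by rw [hκdef]; positivity
  have hκ1 : κ ≤ 1 := by
    rw [hκdef, div_le_one hjpos]
    have : (0:ℝ) ≤ (j : ℝ) := Nat.cast_nonneg j
    linarith
  have h5 := hN₀ j hjN
  have ht : C * qq ^ j ≤ (1 - rho_err) * κ / 2 := by
    have heq : (1 - rho_err) * κ / 2 = (1 - rho_err) / (2 * ((j : ℝ) + 1)) := by
      rw [hκdef]; field_simp
    rw [heq, le_div_iff₀ (by positivity)]
    nlinarith
  have hE : 1 + κ ≤ Real.exp κ := by linarith [Real.add_one_le_exp κ]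
  have hfinal : rho_err / (1 - rho_err) ≤ Real.exp κ * (rk / (1 - rk)) :=
    aux_scalar hρ0 hρ hrk0 hrkρ (mul_nonneg hC0 (pow_nonneg hq0 j)) hlowrk hκ0 hκ1 ht hE
  have hcast : (1 : ℝ) / ((j + 1 : ℕ) : ℝ) = κ := by rw [hκdef]; push_cast; ring
  rw [hcast]
  calc ANorm A (u - uk (j + 1 + 1))
      ≤ rho_err / (1 - rho_err) * ANorm A (uk (j + 1 + 1) - uk (j + 1)) := hbound (j + 1)
    _ ≤ Real.exp κ * (rk / (1 - rk)) * ANorm A (uk (j + 1 + 1) - uk (j + 1)) :=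
        mul_le_mul_of_nonneg_right hfinal (Real.sqrt_nonneg _)
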